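/- Let n be an even positive integer and V a real n×n circulant symmetric positive definite matrix with first column (v_0,…,v_{n−1}). Then Tr(F_n · log V) = log(Λ_0) − log(Λ_{n/2}), where Λ_0 = ∑_{l=0}^{n−1} v_l and Λ_{n/2} = ∑_{l=0}^{n−1} (−1)^l v_l are the eigenvalues of V corresponding to the Fourier modes k = 0 and k = n/2 (both are positive since V is positive definite). -/

import Mathlib

open Matrix

/-- The `m × m` flip matrix `F_m`: with 0-based indices, entry `(i,j)` is `1`
iff `i + j = m - 1`. -/
noncomputable def flipMat (m : ℕ) : Matrix (Fin m) (Fin m) ℝ :=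
  Matrix.of fun i j => if (i : ℕ) + (j : ℕ) = m - 1 then 1 else 0

/-- Matrix logarithm defined via the continuous functional calculus
(spectral calculus). -/
noncomputable def mlog {k : ℕ} (M : Matrix (Fin k) (Fin k) ℝ) :
    Matrix (Fin k) (Fin k) ℝ :=
  cfc Real.log M

/- ### Auxiliary lemmas -/

lemma negOnePow_mod_two (k : ℕ) : ((-1 : ℝ)) ^ k = (-1) ^ (k % 2) := by
  rcases Nat.even_or_odd k with h | h
  · rw [h.neg_one_pow, Nat.even_iff.mp h, pow_zero]
  · rw [h.neg_one_pow, Nat.odd_iff.mp h, pow_one]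

lemma negOnePow_sq (k : ℕ) : ((-1 : ℝ)) ^ k * (-1) ^ k = 1 := by
  rw [← pow_add]
  exact Even.neg_one_pow ⟨k, rfl⟩

lemma fin_parity_add {m : ℕ} (x y : Fin (m + m)) :
    ((-1 : ℝ)) ^ ((x + y : Fin (m + m)) : ℕ) = (-1) ^ (x : ℕ) * (-1) ^ (y : ℕ) := by
  rw [Fin.val_add, negOnePow_mod_two, Nat.mod_mod_of_dvd _ ⟨m, by ring⟩,
    ← negOnePow_mod_two, pow_add]

lemma fin_parity_neg {m : ℕ} (hm : 0 < m) (x : Fin (m + m)) :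
    ((-1 : ℝ)) ^ ((-x : Fin (m + m)) : ℕ) = (-1) ^ (x : ℕ) := by
  haveI : NeZero (m + m) := ⟨by omega⟩
  have h := fin_parity_add (-x) x
  rw [neg_add_cancel, Fin.val_zero, pow_zero] at h
  calc (-1 : ℝ) ^ ((-x : Fin (m + m)) : ℕ)
      = (-1 : ℝ) ^ ((-x : Fin (m + m)) : ℕ) * ((-1 : ℝ) ^ (x : ℕ) * (-1 : ℝ) ^ (x : ℕ)) := by
        rw [negOnePow_sq, mul_one]
    _ = ((-1 : ℝ) ^ ((-x : Fin (m + m)) : ℕ) * (-1 : ℝ) ^ (x : ℕ)) * (-1 : ℝ) ^ (x : ℕ) := by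
        ring
    _ = (-1 : ℝ) ^ (x : ℕ) := by rw [← h, one_mul]

lemma pow_mulVec_eig {N : ℕ} (M : Matrix (Fin N) (Fin N) ℝ) (y : Fin N → ℝ) (c : ℝ)
    (h : M *ᵥ y = c • y) (k : ℕ) : (M ^ k) *ᵥ y = (c ^ k) • y := by
  induction k with
  | zero => simp [Matrix.one_mulVec]
  | succ k ih =>
      rw [pow_succ, ← Matrix.mulVec_mulVec, h, Matrix.mulVec_smul, ih, smul_smul, ← pow_succ']

lemma aeval_mulVec_eig {N : ℕ} (M : Matrix (Fin N) (Fin N) ℝ) (y : Fin N → ℝ) (c : ℝ)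
    (h : M *ᵥ y = c • y) (p : Polynomial ℝ) :
    (Polynomial.aeval M p) *ᵥ y = (p.eval c) • y := by
  induction p using Polynomial.induction_on' with
  | add p q hp hq => rw [map_add, Matrix.add_mulVec, hp, hq, Polynomial.eval_add, add_smul]
  | monomial k a =>
      rw [Polynomial.aeval_monomial, Polynomial.eval_monomial, ← Matrix.mulVec_mulVec,
        pow_mulVec_eig M y c h k, Matrix.mulVec_smul,
        Algebra.algebraMap_eq_smul_one a, Matrix.smul_mulVec, Matrix.one_mulVec,
        smul_smul, mul_comm]

lemma eig_mem_spectrum {N : ℕ} (M : Matrix (Fin N) (Fin N) ℝ) (y : Fin N → ℝ) (c : ℝ)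
    (h : M *ᵥ y = c • y) (hy : y ≠ 0) : c ∈ spectrum ℝ M := by
  have heq := AlgEquiv.spectrum_eq (Matrix.toLinAlgEquiv' :
    Matrix (Fin N) (Fin N) ℝ ≃ₐ[ℝ] ((Fin N → ℝ) →ₗ[ℝ] (Fin N → ℝ))) M
  rw [← heq, ← Module.End.hasEigenvalue_iff_mem_spectrum]
  exact Module.End.hasEigenvalue_of_hasEigenvector
    ⟨Module.End.mem_eigenspace_iff.mpr (by rw [Matrix.toLinAlgEquiv'_apply, h]), hy⟩

lemma circulant_pow {m : ℕ} (hm : 0 < m) (w : Fin (m + m) → ℝ) (k : ℕ) :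
    ∃ u, (Matrix.circulant w) ^ k = Matrix.circulant u := by
  haveI : NeZero (m + m) := ⟨by omega⟩
  induction k with
  | zero =>
      refine ⟨Pi.single 0 1, ?_⟩
      rw [pow_zero]
      exact (Matrix.circulant_single_one _ _).symm
  | succ k ih =>
      obtain ⟨u, hu⟩ := ih
      exact ⟨Matrix.circulant u *ᵥ w, by rw [pow_succ, hu, Matrix.circulant_mul]⟩

lemma circulant_aeval {m : ℕ} (hm : 0 < m) (w : Fin (m + m) → ℝ) (p : Polynomial ℝ) :
    ∃ u, Polynomial.aeval (Matrix.circulant w) p = Matrix.circulant u := by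
  haveI : NeZero (m + m) := ⟨by omega⟩
  induction p using Polynomial.induction_on' with
  | add p q hp hq =>
      obtain ⟨u1, h1⟩ := hp; obtain ⟨u2, h2⟩ := hq
      exact ⟨u1 + u2, by rw [map_add, h1, h2, Matrix.circulant_add]⟩
  | monomial k a =>
      obtain ⟨u, hu⟩ := circulant_pow hm w k
      refine ⟨a • u, ?_⟩
      rw [Polynomial.aeval_monomial, hu, Matrix.circulant_smul,
        Algebra.algebraMap_eq_smul_one a, smul_mul_assoc, one_mul]

lemma sum_sub_reindex {m : ℕ} (hm : 0 < m) (w : Fin (m + m) → ℝ) (i : Fin (m + m)) :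
    ∑ j, w (i - j) = ∑ l, w l := by
  haveI : NeZero (m + m) := ⟨by omega⟩
  calc ∑ j, w (i - j) = ∑ j, w ((Equiv.subLeft i) j) :=
        Finset.sum_congr rfl fun j _ => by rw [Equiv.subLeft_apply]
    _ = ∑ l, w l := (Equiv.subLeft i).sum_comp w

set_option maxHeartbeats 1000000 in
/-- For `n = m + m` even positive and `V` circulant symmetric
positive definite with first column `v`, the Fourier eigenvalues
`Λ₀ = ∑ v_l` and `Λ_{n/2} = ∑ (-1)^l v_l` are positive and
`Tr(F_n log V) = log Λ₀ - log Λ_{n/2}`. -/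
theorem trace_flip_log_eq_log_fourier_ratio
    (m : ℕ) (hm : 0 < m)
    (v : Fin (m + m) → ℝ) (hv : ∀ l, v (-l) = v l)
    (V : Matrix (Fin (m + m)) (Fin (m + m)) ℝ) (hV : V = Matrix.circulant v)
    (hVpd : V.PosDef) :
    0 < ∑ l : Fin (m + m), v l
      ∧ 0 < ∑ l : Fin (m + m), (-1 : ℝ) ^ (l : ℕ) * v l
      ∧ (flipMat (m + m) * mlog V).trace
          = Real.log (∑ l : Fin (m + m), v l)
            - Real.log (∑ l : Fin (m + m), (-1 : ℝ) ^ (l : ℕ) * v l) := by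
  haveI : NeZero (m + m) := ⟨by omega⟩
  -- eigenvector equations for the constant and alternating vectors
  have hVones : V *ᵥ (fun _ : Fin (m + m) => (1 : ℝ))
      = (∑ l : Fin (m + m), v l) • (fun _ : Fin (m + m) => (1 : ℝ)) := by
    ext i
    rw [hV]
    simp only [Matrix.mulVec, dotProduct, Matrix.circulant_apply, Pi.smul_apply,
      smul_eq_mul, mul_one]
    exact sum_sub_reindex hm v i
  have hValt : V *ᵥ (fun i : Fin (m + m) => (-1 : ℝ) ^ (i : ℕ))
      = (∑ l : Fin (m + m), (-1 : ℝ) ^ (l : ℕ) * v l)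
        • (fun i : Fin (m + m) => (-1 : ℝ) ^ (i : ℕ)) := by
    ext i
    rw [hV]
    simp only [Matrix.mulVec, dotProduct, Matrix.circulant_apply, Pi.smul_apply,
      smul_eq_mul]
    have key : ∀ j : Fin (m + m), v (i - j) * (-1 : ℝ) ^ (j : ℕ)
        = (-1 : ℝ) ^ (i : ℕ) * ((-1 : ℝ) ^ ((i - j : Fin (m + m)) : ℕ) * v (i - j)) := by
      intro j
      have h1 : (-1 : ℝ) ^ (i : ℕ)
          = (-1 : ℝ) ^ ((i - j : Fin (m + m)) : ℕ) * (-1 : ℝ) ^ (j : ℕ) := by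
        rw [← fin_parity_add (i - j) j, sub_add_cancel]
      rcases Nat.even_or_odd ((i - j : Fin (m + m)) : ℕ) with h | h
      · rw [h1, h.neg_one_pow]; ring
      · rw [h1, h.neg_one_pow]; ring
    calc ∑ j, v (i - j) * (-1 : ℝ) ^ (j : ℕ)
        = ∑ j, (-1 : ℝ) ^ (i : ℕ) * ((-1 : ℝ) ^ ((i - j : Fin (m + m)) : ℕ) * v (i - j)) :=
          Finset.sum_congr rfl fun j _ => key j
      _ = (-1 : ℝ) ^ (i : ℕ)
            * ∑ j, ((-1 : ℝ) ^ ((i - j : Fin (m + m)) : ℕ) * v (i - j)) := by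
          rw [Finset.mul_sum]
      _ = (-1 : ℝ) ^ (i : ℕ) * ∑ l : Fin (m + m), (-1 : ℝ) ^ (l : ℕ) * v l := by
          exact congrArg _ (sum_sub_reindex hm (fun l => (-1 : ℝ) ^ (l : ℕ) * v l) i)
      _ = (∑ l : Fin (m + m), (-1 : ℝ) ^ (l : ℕ) * v l) * (-1 : ℝ) ^ (i : ℕ) := mul_comm _ _
  -- nonvanishing of the two eigenvectors
  have hones_ne : (fun _ : Fin (m + m) => (1 : ℝ)) ≠ 0 := by
    intro h
    have := congrFun h ⟨0, by omega⟩
    simp at this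
  have halt_ne : (fun i : Fin (m + m) => (-1 : ℝ) ^ (i : ℕ)) ≠ 0 := by
    intro h
    have := congrFun h ⟨0, by omega⟩
    simp at this
  -- positivity of the two eigenvalues
  have hK : (0 : ℝ) < (m + m : ℕ) := by
    have : (0 : ℕ) < m + m := by omega
    exact_mod_cast this
  have hΛ0pos : 0 < ∑ l : Fin (m + m), v l := by
    have hq := hVpd.dotProduct_mulVec_pos hones_ne
    rw [hVones] at hq
    have he : dotProduct (star (fun _ : Fin (m + m) => (1 : ℝ)))
        ((∑ l : Fin (m + m), v l) • (fun _ : Fin (m + m) => (1 : ℝ)))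
        = (m + m : ℕ) * ∑ l : Fin (m + m), v l := by
      simp only [dotProduct, Pi.star_apply, star_trivial, Pi.smul_apply, smul_eq_mul,
        mul_one, one_mul, Finset.sum_const, Finset.card_univ, Fintype.card_fin, nsmul_eq_mul]
    rw [he] at hq
    by_contra hle
    push_neg at hle
    nlinarith [hq, hK]
  have hΛ1pos : 0 < ∑ l : Fin (m + m), (-1 : ℝ) ^ (l : ℕ) * v l := by
    have hq := hVpd.dotProduct_mulVec_pos halt_ne
    rw [hValt] at hq
    have he : dotProduct (star (fun i : Fin (m + m) => (-1 : ℝ) ^ (i : ℕ)))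
        ((∑ l : Fin (m + m), (-1 : ℝ) ^ (l : ℕ) * v l)
          • (fun i : Fin (m + m) => (-1 : ℝ) ^ (i : ℕ)))
        = (m + m : ℕ) * ∑ l : Fin (m + m), (-1 : ℝ) ^ (l : ℕ) * v l := by
      simp only [dotProduct, Pi.star_apply, star_trivial, Pi.smul_apply, smul_eq_mul]
      have : ∀ j : Fin (m + m), (-1 : ℝ) ^ (j : ℕ)
          * ((∑ l : Fin (m + m), (-1 : ℝ) ^ (l : ℕ) * v l) * (-1 : ℝ) ^ (j : ℕ))
          = ∑ l : Fin (m + m), (-1 : ℝ) ^ (l : ℕ) * v l := by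
        intro j
        rcases Nat.even_or_odd (j : ℕ) with h | h
        · rw [h.neg_one_pow]; ring
        · rw [h.neg_one_pow]; ring
      rw [Finset.sum_congr rfl fun j _ => this j]
      simp [Finset.sum_const, Finset.card_univ, Fintype.card_fin, nsmul_eq_mul]
    rw [he] at hq
    by_contra hle
    push_neg at hle
    nlinarith [hq, hK]
  -- the matrix logarithm as a polynomial in V
  have hsa : IsSelfAdjoint V := hVpd.1
  have hfin : (spectrum ℝ V).Finite := Matrix.finite_real_spectrum
  set p : Polynomial ℝ := Lagrange.interpolate hfin.toFinset id Real.log with hp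
  have heval : ∀ x ∈ spectrum ℝ V, p.eval x = Real.log x := by
    intro x hx
    exact Lagrange.eval_interpolate_at_node Real.log (Set.injOn_id _)
      (hfin.mem_toFinset.mpr hx)
  have hmlog : mlog V = Polynomial.aeval V p := by
    have h1 : cfc Real.log V = cfc (fun x => p.eval x) V :=
      cfc_congr fun x hx => (heval x hx).symm
    show cfc Real.log V = _
    rw [h1, cfc_polynomial p V hsa]
  -- spectrum membership of the two eigenvalues
  have hΛ0mem : (∑ l : Fin (m + m), v l) ∈ spectrum ℝ V :=
    eig_mem_spectrum V _ _ hVones hones_ne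
  have hΛ1mem : (∑ l : Fin (m + m), (-1 : ℝ) ^ (l : ℕ) * v l) ∈ spectrum ℝ V :=
    eig_mem_spectrum V _ _ hValt halt_ne
  -- eigenvector equations for mlog V
  have hlog1 : mlog V *ᵥ (fun _ : Fin (m + m) => (1 : ℝ))
      = Real.log (∑ l : Fin (m + m), v l) • (fun _ : Fin (m + m) => (1 : ℝ)) := by
    rw [hmlog, aeval_mulVec_eig V _ _ hVones p, heval _ hΛ0mem]
  have hlog2 : mlog V *ᵥ (fun i : Fin (m + m) => (-1 : ℝ) ^ (i : ℕ))
      = Real.log (∑ l : Fin (m + m), (-1 : ℝ) ^ (l : ℕ) * v l)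
        • (fun i : Fin (m + m) => (-1 : ℝ) ^ (i : ℕ)) := by
    rw [hmlog, aeval_mulVec_eig V _ _ hValt p, heval _ hΛ1mem]
  -- mlog V is circulant
  obtain ⟨a, ha⟩ : ∃ a, mlog V = Matrix.circulant a := by
    rw [hmlog, hV]; exact circulant_aeval hm v p
  rw [ha] at hlog1 hlog2
  -- reindexing by negation
  have hsum_neg : ∀ w : Fin (m + m) → ℝ, ∑ j : Fin (m + m), w (-j) = ∑ l, w l := by
    intro w
    calc ∑ j : Fin (m + m), w (-j) = ∑ j, w ((Equiv.neg (Fin (m + m))) j) :=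
          Finset.sum_congr rfl fun j _ => by rw [Equiv.neg_apply]
      _ = ∑ l, w l := Equiv.sum_comp (Equiv.neg (Fin (m + m))) w
  -- Fourier coefficients of mlog V
  have hS0 : ∑ l : Fin (m + m), a l = Real.log (∑ l : Fin (m + m), v l) := by
    have h0 := congrFun hlog1 0
    simp only [Matrix.mulVec, dotProduct, Matrix.circulant_apply, mul_one,
      Pi.smul_apply, smul_eq_mul, zero_sub] at h0
    calc ∑ l : Fin (m + m), a l = ∑ j : Fin (m + m), a (-j) := (hsum_neg a).symm
      _ = Real.log (∑ l : Fin (m + m), v l) := h0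
  have hS1 : ∑ l : Fin (m + m), (-1 : ℝ) ^ (l : ℕ) * a l
      = Real.log (∑ l : Fin (m + m), (-1 : ℝ) ^ (l : ℕ) * v l) := by
    have h0 := congrFun hlog2 0
    simp only [Matrix.mulVec, dotProduct, Matrix.circulant_apply, Pi.smul_apply,
      smul_eq_mul, zero_sub, Fin.val_zero, pow_zero, mul_one] at h0
    calc ∑ l : Fin (m + m), (-1 : ℝ) ^ (l : ℕ) * a l
        = ∑ l : Fin (m + m), a l * (-1 : ℝ) ^ ((-l : Fin (m + m)) : ℕ) :=
          Finset.sum_congr rfl fun l _ => by rw [fin_parity_neg hm l, mul_comm]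
      _ = ∑ j : Fin (m + m), a (-j) * (-1 : ℝ) ^ ((-(-j) : Fin (m + m)) : ℕ) :=
          (hsum_neg (fun l => a l * (-1 : ℝ) ^ ((-l : Fin (m + m)) : ℕ))).symm
      _ = ∑ j : Fin (m + m), a (-j) * (-1 : ℝ) ^ (j : ℕ) :=
          Finset.sum_congr rfl fun j _ => by rw [neg_neg]
      _ = Real.log (∑ l : Fin (m + m), (-1 : ℝ) ^ (l : ℕ) * v l) := h0
  -- value of 1 in Fin (m+m)
  have hval1 : ((1 : Fin (m + m)) : ℕ) = 1 := by
    rw [Fin.val_one']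
    exact Nat.mod_eq_of_lt (by omega)
  -- rev in group terms
  have hrev : ∀ i : Fin (m + m), Fin.rev i = -(i + 1) := by
    intro i
    apply eq_neg_of_add_eq_zero_left
    apply Fin.ext
    have hi := i.isLt
    have hi1 : ((i + 1 : Fin (m + m)) : ℕ) = if (i : ℕ) + 1 = m + m then 0 else (i : ℕ) + 1 := by
      rw [Fin.val_add_eq_ite, hval1]
      split_ifs <;> omega
    rw [Fin.val_add_eq_ite, hi1, Fin.val_rev, Fin.val_zero]
    split_ifs <;> omega
  -- trace of flip * circulant
  have htrace1 : (flipMat (m + m) * mlog V).trace = ∑ i : Fin (m + m), a (Fin.rev i - i) := by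
    rw [ha, Matrix.trace]
    refine Finset.sum_congr rfl fun i _ => ?_
    rw [Matrix.diag_apply, Matrix.mul_apply]
    rw [Finset.sum_eq_single (Fin.rev i)]
    · have hcond : (i : ℕ) + ((Fin.rev i : Fin (m + m)) : ℕ) = m + m - 1 := by
        rw [Fin.val_rev]
        have := i.isLt
        omega
      rw [Matrix.circulant_apply]
      simp only [flipMat, Matrix.of_apply]
      rw [if_pos hcond, one_mul]
    · intro j _ hj
      have hcond : ¬ ((i : ℕ) + (j : ℕ) = m + m - 1) := by
        intro hcon
        apply hj
        apply Fin.ext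
        rw [Fin.val_rev]
        have := i.isLt
        have := j.isLt
        omega
      simp only [flipMat, Matrix.of_apply]
      rw [if_neg hcond, zero_mul]
    · intro h
      exact absurd (Finset.mem_univ _) h
  -- the combinatorial identity
  have h2m : 2 ≤ m + m := by omega
  have hkey : ∑ i : Fin (m + m), a (Fin.rev i - i)
      = (∑ l : Fin (m + m), a l) - ∑ l : Fin (m + m), (-1 : ℝ) ^ (l : ℕ) * a l := by
    have e1 : ∀ x : Fin (m + m),
        -((((-1 : Fin (m + m)) - x)) + 1) - (((-1 : Fin (m + m)) - x)) = x + x + 1 := by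
      intro x; abel
    have hA : ∑ i : Fin (m + m), a (Fin.rev i - i) = ∑ x : Fin (m + m), a (x + x + 1) := by
      calc ∑ i : Fin (m + m), a (Fin.rev i - i)
          = ∑ i : Fin (m + m), a (-(i + 1) - i) :=
            Finset.sum_congr rfl fun i _ => by rw [hrev]
        _ = ∑ x : Fin (m + m), a (-(((Equiv.subLeft (-1 : Fin (m + m))) x) + 1)
              - ((Equiv.subLeft (-1 : Fin (m + m))) x)) :=
            ((Equiv.subLeft (-1 : Fin (m + m))).sum_comp (fun i => a (-(i + 1) - i))).symm
        _ = ∑ x : Fin (m + m), a (x + x + 1) :=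
            Finset.sum_congr rfl fun x _ => by rw [Equiv.subLeft_apply, e1 x]
    have hB : ∑ x : Fin (m + m), a (x + x + 1)
        = 2 * ∑ q : Fin m, a ((Fin.castAdd m q) + (Fin.castAdd m q) + 1) := by
      have hnc : ∀ q : Fin m,
          ((Fin.natAdd m q : Fin (m + m)) + (Fin.natAdd m q)) + 1
            = ((Fin.castAdd m q : Fin (m + m)) + (Fin.castAdd m q)) + 1 := by
        intro q
        congr 1
        apply Fin.ext
        rw [Fin.val_add_eq_ite, Fin.val_add_eq_ite]
        simp only [Fin.coe_castAdd, Fin.coe_natAdd]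
        have := q.isLt
        split_ifs <;> omega
      have step : ∑ x : Fin (m + m), a (x + x + 1)
          = (∑ q : Fin m, a ((Fin.castAdd m q) + (Fin.castAdd m q) + 1))
            + ∑ q : Fin m, a ((Fin.natAdd m q) + (Fin.natAdd m q) + 1) :=
        Fin.sum_univ_add (f := fun x : Fin (m + m) => a (x + x + 1))
      have step2 : ∑ q : Fin m, a ((Fin.natAdd m q) + (Fin.natAdd m q) + 1)
          = ∑ q : Fin m, a ((Fin.castAdd m q) + (Fin.castAdd m q) + 1) :=
        Finset.sum_congr rfl fun q _ => congrArg a (hnc q)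
      rw [step, step2]
      ring
    set f : Fin m × Fin 2 → Fin (m + m) :=
      fun q => (Fin.castAdd m q.1) + (Fin.castAdd m q.1) + (Fin.castLE h2m q.2) with hf
    have hfval : ∀ q : Fin m × Fin 2, ((f q) : ℕ) = (q.1 : ℕ) + (q.1 : ℕ) + (q.2 : ℕ) := by
      intro q
      rw [hf]
      simp only []
      rw [Fin.val_add_eq_ite, Fin.val_add_eq_ite]
      simp only [Fin.coe_castAdd, Fin.coe_castLE]
      have := q.1.isLt
      have := q.2.isLt
      split_ifs <;> omega
    have hfbij : Function.Bijective f := by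
      rw [Fintype.bijective_iff_injective_and_card]
      constructor
      · intro q q' hqq
        have h := congrArg Fin.val hqq
        rw [hfval q, hfval q'] at h
        have h1 := q.1.isLt; have h2 := q.2.isLt
        have h3 := q'.1.isLt; have h4 := q'.2.isLt
        have : (q.1 : ℕ) = q'.1 ∧ (q.2 : ℕ) = (q'.2 : ℕ) := by omega
        exact Prod.ext (Fin.ext this.1) (Fin.ext this.2)
      · simp only [Fintype.card_prod, Fintype.card_fin]
        omega
    have hC : ∑ l : Fin (m + m), ((1 : ℝ) - (-1) ^ (l : ℕ)) * a l
        = 2 * ∑ q : Fin m, a (f (q, 1)) := by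
      rw [← Fintype.sum_bijective f hfbij
        (fun q => ((1 : ℝ) - (-1) ^ ((f q : Fin (m + m)) : ℕ)) * a (f q)) _ (fun q => rfl)]
      rw [Fintype.sum_prod_type]
      have hinner : ∀ q : Fin m,
          ∑ ε : Fin 2, ((1 : ℝ) - (-1) ^ ((f (q, ε) : Fin (m + m)) : ℕ)) * a (f (q, ε))
            = 2 * a (f (q, 1)) := by
        intro q
        rw [Fin.sum_univ_two, hfval (q, 0), hfval (q, 1)]
        have e0 : (-1 : ℝ) ^ ((q : ℕ) + (q : ℕ) + (((0 : Fin 2) : ℕ))) = 1 := by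
          rw [show (((0 : Fin 2)) : ℕ) = 0 from rfl, add_zero]
          exact Even.neg_one_pow ⟨(q : ℕ), rfl⟩
        have e1' : (-1 : ℝ) ^ ((q : ℕ) + (q : ℕ) + (((1 : Fin 2) : ℕ))) = -1 := by
          rw [show (((1 : Fin 2)) : ℕ) = 1 from rfl, pow_succ,
            Even.neg_one_pow ⟨(q : ℕ), rfl⟩, one_mul]
        rw [e0, e1']
        ring
      rw [Finset.sum_congr rfl (fun q _ => hinner q), Finset.mul_sum]
    have hmatch : ∀ q : Fin m, f (q, 1) = (Fin.castAdd m q) + (Fin.castAdd m q) + 1 := by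
      intro q
      show (Fin.castAdd m q) + (Fin.castAdd m q) + (Fin.castLE h2m (1 : Fin 2))
          = (Fin.castAdd m q) + (Fin.castAdd m q) + 1
      congr 1
      apply Fin.ext
      rw [Fin.coe_castLE, hval1]
      rfl
    calc ∑ i : Fin (m + m), a (Fin.rev i - i)
        = ∑ x : Fin (m + m), a (x + x + 1) := hA
      _ = 2 * ∑ q : Fin m, a ((Fin.castAdd m q) + (Fin.castAdd m q) + 1) := hB
      _ = 2 * ∑ q : Fin m, a (f (q, 1)) := by
          rw [show (∑ q : Fin m, a (f (q, 1)))
              = ∑ q : Fin m, a ((Fin.castAdd m q) + (Fin.castAdd m q) + 1) from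
            Finset.sum_congr rfl fun q _ => congrArg a (hmatch q)]
      _ = ∑ l : Fin (m + m), ((1 : ℝ) - (-1) ^ (l : ℕ)) * a l := hC.symm
      _ = ∑ l : Fin (m + m), (a l - (-1 : ℝ) ^ (l : ℕ) * a l) :=
          Finset.sum_congr rfl fun l _ => by rw [sub_mul, one_mul]
      _ = (∑ l : Fin (m + m), a l) - ∑ l : Fin (m + m), (-1 : ℝ) ^ (l : ℕ) * a l :=
          Finset.sum_sub_distrib _ _
  exact ⟨hΛ0pos, hΛ1pos, by rw [htrace1, hkey, hS0, hS1]⟩
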